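/- Let A, C, D, q ∈ ℂ with A ≠ 0, q ≠ 0 and |q| ≠ 1. Let f be meromorphic on ℂ and satisfy f'(z) = A·f(qz) + C·f(z) + D at every point z at which f is analytic at both z and qz. If f has a pole of order t ≥ 1 at some point z₀ ≠ 0, then for every n ≥ 1, f has a pole of order t + n at the point q^n·z₀. -/

import Mathlib

open Filter Topology

lemma pole_step (A C D q : ℂ) (hA : A ≠ 0) (hq0 : q ≠ 0)
    (f : ℂ → ℂ) (hf : ∀ z : ℂ, MeromorphicAt f z)
    (heq : ∀ z : ℂ, AnalyticAt ℂ f z → AnalyticAt ℂ f (q * z) →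
      deriv f z = A * f (q * z) + C * f z + D)
    (w : ℂ) (s : ℕ) (hs : 1 ≤ s)
    (hpole : meromorphicOrderAt f w = (-(s : ℤ) : ℤ)) :
    meromorphicOrderAt f (q * w) = ((-(s : ℤ) - 1 : ℤ) : WithTop ℤ) := by
  obtain ⟨g, hg, hgw, hfg⟩ := ((meromorphicOrderAt_eq_int_iff (n := -(s : ℤ)) (hf w))).mp hpole
  -- extract open sets
  obtain ⟨T0, hT0o, hwT0, hT0⟩ := mem_nhdsWithin.mp (hf w).eventually_analyticAt
  obtain ⟨T, hTo, hwT, hT⟩ := mem_nhdsWithin.mp hfg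
  obtain ⟨T1, hT1sub, hT1o, hwT1⟩ := mem_nhds_iff.mp hg.eventually_analyticAt
  obtain ⟨T2, hT2o, hqwT2, hT2⟩ := mem_nhdsWithin.mp (hf (q * w)).eventually_analyticAt
  -- analyticity of deriv g on T1
  have hdg : ∀ z ∈ T1, AnalyticAt ℂ (deriv g) z :=
    (AnalyticOnNhd.deriv (fun z hz => hT1sub hz))
  set h : ℂ → ℂ := fun z =>
    (-(s : ℂ) * g z + (z - w) * deriv g z - C * (z - w) * g z - D * (z - w) ^ (s + 1)) / A with hh
  have hha : AnalyticAt ℂ h w := by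
    apply AnalyticAt.div _ analyticAt_const hA
    apply AnalyticAt.sub
    apply AnalyticAt.sub
    apply AnalyticAt.add
    · exact analyticAt_const.mul hg
    · exact ((analyticAt_id.sub analyticAt_const)).mul (hdg w hwT1)
    · exact (analyticAt_const.mul (analyticAt_id.sub analyticAt_const)).mul hg
    · exact analyticAt_const.mul ((analyticAt_id.sub analyticAt_const).pow _)
  have hhw : h w ≠ 0 := by
    have : h w = (-(s : ℂ) * g w) / A := by
      simp [hh]
    rw [this]
    have hs0 : (s : ℂ) ≠ 0 := Nat.cast_ne_zero.mpr (by omega)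
    exact div_ne_zero (mul_ne_zero (neg_ne_zero.mpr hs0) hgw) hA
  -- the key pointwise identity
  set V : Set ℂ := T0 ∩ T ∩ T1 ∩ ((fun z => q * z) ⁻¹' T2) with hV
  have hVo : IsOpen V := (((hT0o.inter hTo).inter hT1o).inter
    (hT2o.preimage (by continuity)))
  have hwV : w ∈ V := ⟨⟨⟨hwT0, hwT⟩, hwT1⟩, hqwT2⟩
  have key : ∀ z ∈ V, z ≠ w → f (q * z) = (z - w) ^ (-(s : ℤ) - 1) * h z := by
    rintro z ⟨⟨⟨hz0, hzT⟩, hz1⟩, hz2⟩ hzw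
    have hu : z - w ≠ 0 := sub_ne_zero.mpr hzw
    have hfz : AnalyticAt ℂ f z := hT0 ⟨hz0, hzw⟩
    have hqzw : q * z ≠ q * w := fun hcon => hzw (mul_left_cancel₀ hq0 hcon)
    have hfqz : AnalyticAt ℂ f (q * z) := hT2 ⟨hz2, hqzw⟩
    -- derivative of f at z
    have hFeq : f =ᶠ[𝓝 z] (fun y => (y - w) ^ (-(s : ℤ)) * g y) := by
      apply Filter.eventuallyEq_of_mem ((hTo.inter
        (isOpen_compl_singleton : IsOpen ({w}ᶜ : Set ℂ))).mem_nhds ⟨hzT, hzw⟩)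
      intro y hy
      exact hT ⟨hy.1, hy.2⟩
    have hdg' : HasDerivAt g (deriv g z) z :=
      (hT1sub hz1).differentiableAt.hasDerivAt
    have hzp : HasDerivAt (fun y : ℂ => (y - w) ^ (-(s : ℤ)))
        ((-(s : ℤ)) * (z - w) ^ (-(s : ℤ) - 1)) z := by
      have := (hasDerivAt_zpow (-(s : ℤ)) (z - w) (Or.inl hu)).comp z
        ((hasDerivAt_id z).sub_const w)
      simpa [Function.comp_def] using this
    have hF : HasDerivAt (fun y => (y - w) ^ (-(s : ℤ)) * g y)
        ((-(s : ℤ)) * (z - w) ^ (-(s : ℤ) - 1) * g z + (z - w) ^ (-(s : ℤ)) * deriv g z) z :=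
      hzp.mul hdg'
    have hderiv : deriv f z
        = (-(s : ℤ)) * (z - w) ^ (-(s : ℤ) - 1) * g z + (z - w) ^ (-(s : ℤ)) * deriv g z := by
      rw [hFeq.deriv_eq, hF.deriv]
    have hE := heq z hfz hfqz
    have hfzval : f z = (z - w) ^ (-(s : ℤ)) * g z := hT ⟨hzT, hzw⟩
    have hfq : f (q * z) = (deriv f z - C * f z - D) / A := by
      rw [hE]; field_simp; ring
    rw [hfq, hderiv, hfzval, hh]
    -- now pure algebra with zpow
    have e1 : (z - w) ^ (-(s : ℤ)) = ((z - w) ^ s)⁻¹ := by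
      rw [zpow_neg, zpow_natCast]
    have e2 : (z - w) ^ (-(s : ℤ) - 1) = ((z - w) ^ (s + 1))⁻¹ := by
      rw [show (-(s : ℤ) - 1) = -((s + 1 : ℕ) : ℤ) by push_cast; ring, zpow_neg, zpow_natCast]
    rw [e1, e2]
    have hp1 : (z - w) ^ s ≠ 0 := pow_ne_zero _ hu
    have hp2 : (z - w) ^ (s + 1) ≠ 0 := pow_ne_zero _ hu
    field_simp
    push_cast
    ring
  -- conclude for order at q * w
  rw [meromorphicOrderAt_eq_int_iff (hf (q * w))]
  refine ⟨fun y => q ^ (s + 1) * h (q⁻¹ * y), ?_, ?_, ?_⟩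
  · apply analyticAt_const.mul
    have : AnalyticAt ℂ h (q⁻¹ * (q * w)) := by
      rwa [inv_mul_cancel_left₀ hq0]
    exact this.comp (analyticAt_const.mul analyticAt_id)
  · simp only [inv_mul_cancel_left₀ hq0]
    exact mul_ne_zero (pow_ne_zero _ hq0) hhw
  · rw [eventually_nhdsWithin_iff]
    have hmem : ((fun y => q⁻¹ * y) ⁻¹' V) ∈ 𝓝 (q * w) := by
      apply (hVo.preimage (by continuity)).mem_nhds
      simpa [inv_mul_cancel_left₀ hq0] using hwV
    filter_upwards [hmem] with y hy hyne
    have hzV : q⁻¹ * y ∈ V := hy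
    have hzne : q⁻¹ * y ≠ w := by
      intro hcon
      apply hyne
      have : y = q * (q⁻¹ * y) := by rw [mul_inv_cancel_left₀ hq0]
      rw [Set.mem_singleton_iff, this, hcon]
    have := key (q⁻¹ * y) hzV hzne
    rw [mul_inv_cancel_left₀ hq0] at this
    rw [this]
    have : (q⁻¹ * y - w) = q⁻¹ * (y - q * w) := by field_simp
    rw [this, mul_zpow, smul_eq_mul]
    have : (q⁻¹ : ℂ) ^ (-(s : ℤ) - 1) = q ^ (s + 1) := by
      rw [inv_zpow, ← zpow_neg, show -(-(s : ℤ) - 1) = ((s + 1 : ℕ) : ℤ) by push_cast; ring,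
        zpow_natCast]
    rw [this]
    ring

/-- For `A ≠ 0`, `q ≠ 0`, `|q| ≠ 1`: if a meromorphic solution of
`f'(z) = A f(qz) + C f(z) + D` has a pole of order `t ≥ 1` at `z₀ ≠ 0`, then for every
`n ≥ 1` it has a pole of order `t + n` at `qⁿ z₀`. -/
theorem stmt19 (A C D q : ℂ) (hA : A ≠ 0) (hq0 : q ≠ 0) (hq1 : ‖q‖ ≠ 1)
    (f : ℂ → ℂ) (hf : ∀ z : ℂ, MeromorphicAt f z)
    (heq : ∀ z : ℂ, AnalyticAt ℂ f z → AnalyticAt ℂ f (q * z) →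
      deriv f z = A * f (q * z) + C * f z + D)
    (z₀ : ℂ) (hz₀ : z₀ ≠ 0) (t : ℕ) (ht : 1 ≤ t)
    (hpole : meromorphicOrderAt f z₀ = (-(t : ℤ) : ℤ)) :
    ∀ n : ℕ, 1 ≤ n → meromorphicOrderAt f (q ^ n * z₀) = (-((t : ℤ) + (n : ℤ)) : ℤ) := by
  intro n hn
  induction n, hn using Nat.le_induction with
  | base =>
    have h1 := pole_step A C D q hA hq0 f hf heq z₀ t ht hpole
    have hpt : q ^ 1 * z₀ = q * z₀ := by ring
    rw [hpt, h1]
    congr 1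
    push_cast
    ring
  | succ n hn ih =>
    have hord : meromorphicOrderAt f (q ^ n * z₀) = ((-((t + n : ℕ) : ℤ) : ℤ) : WithTop ℤ) := by
      rw [ih]
      push_cast
      ring_nf
    have h1 := pole_step A C D q hA hq0 f hf heq (q ^ n * z₀) (t + n) (by omega) hord
    have hpt : q ^ (n + 1) * z₀ = q * (q ^ n * z₀) := by ring
    rw [hpt, h1]
    congr 1
    push_cast
    ring
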